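/- (Duality in the cohomology of G_{2,N}) Let N ≥ 2 and let i ≥ j ≥ 0 and a ≥ b ≥ 0 be integers with i ≤ N−2, a ≤ N−2 and i+j+a+b = 2(N−2). If (a,b) = (N−2−j, N−2−i), then π_{i,j}(x,y)·π_{a,b}(x,y) − π_{N−2,N−2}(x,y) lies in the ideal of ℚ[x,y] generated by π_{N−1,0}(x,y) and π_{N,0}(x,y); if (a,b) ≠ (N−2−j, N−2−i), then π_{i,j}(x,y)·π_{a,b}(x,y) itself lies in that ideal. -/

import Mathlib

open MvPolynomial

/-- The two-variable Schur polynomial `π_{i,j}(x,y) = Σ_{ℓ=j}^{i} x^ℓ y^{i+j−ℓ}` in `ℚ[x,y]`,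
for integers `i ≥ j ≥ 0`. -/
noncomputable def schur2 (i j : ℕ) : MvPolynomial (Fin 2) ℚ :=
  ∑ ℓ ∈ Finset.Icc j i, X 0 ^ ℓ * X 1 ^ (i + j - ℓ)

lemma schur2_zero : schur2 0 0 = 1 := by simp [schur2]

lemma schur2_range (m : ℕ) :
    schur2 m 0 = ∑ ℓ ∈ Finset.range (m + 1), X 0 ^ ℓ * X 1 ^ (m - ℓ) := by
  rw [schur2]
  have h : Finset.Icc 0 m = Finset.range (m + 1) := by
    ext x; simp [Nat.lt_succ_iff]
  rw [h]
  simp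

lemma schur2_succ (m : ℕ) :
    schur2 (m + 1) 0 = X 0 * schur2 m 0 + X 1 ^ (m + 1) := by
  rw [schur2_range, schur2_range, Finset.sum_range_succ', Finset.mul_sum]
  simp only [pow_zero, one_mul, Nat.sub_zero]
  congr 1
  apply Finset.sum_congr rfl
  intro t ht
  simp only [Finset.mem_range] at ht
  have h1 : m + 1 - (t + 1) = m - t := by omega
  rw [h1, pow_succ]
  ring

lemma schur2_succ' (m : ℕ) :
    schur2 (m + 1) 0 = X 1 * schur2 m 0 + X 0 ^ (m + 1) := by
  rw [schur2_range, schur2_range, Finset.sum_range_succ, Finset.mul_sum]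
  rw [Nat.sub_self, pow_zero, mul_one]
  congr 1
  apply Finset.sum_congr rfl
  intro t ht
  simp only [Finset.mem_range, Nat.lt_succ_iff] at ht
  have h1 : m + 1 - t = (m - t) + 1 := by omega
  rw [h1, pow_succ]
  ring

lemma schur2_rec (m : ℕ) :
    schur2 (m + 2) 0 = (X 0 + X 1) * schur2 (m + 1) 0 - X 0 * X 1 * schur2 m 0 := by
  rw [show m + 2 = (m + 1) + 1 from rfl, schur2_succ (m + 1), schur2_succ m]
  ring

lemma schur2_split (p q : ℕ) :
    schur2 (p + q + 1) 0 = X 0 ^ (q + 1) * schur2 p 0 + X 1 ^ (p + 1) * schur2 q 0 := by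
  induction q with
  | zero =>
    rw [schur2_succ, schur2_zero]
    ring
  | succ q ih =>
    have e : p + (q + 1) + 1 = (p + q + 1) + 1 := by omega
    rw [e, schur2_succ, ih, schur2_succ q]
    ring

lemma schur2_prod (p q : ℕ) :
    schur2 (p + 1) 0 * schur2 (q + 1) 0 =
      schur2 (p + q + 2) 0 + (X 0 * X 1) * (schur2 p 0 * schur2 q 0) := by
  have e : p + q + 2 = p + (q + 1) + 1 := by omega
  rw [e, schur2_split p (q + 1), schur2_succ p, schur2_succ' q]
  ring

lemma schur2_eq_mul {i j : ℕ} (h : j ≤ i) :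
    schur2 i j = (X 0 * X 1) ^ j * schur2 (i - j) 0 := by
  rw [schur2, schur2_range, Finset.mul_sum]
  rw [show Finset.Icc j i = Finset.map ⟨fun t => t + j, show Function.Injective (fun t : ℕ => t + j) from fun a b h => by simpa using h⟩
      (Finset.range (i - j + 1)) from by
    ext x
    simp only [Finset.mem_map, Finset.mem_range, Function.Embedding.coeFn_mk,
      Finset.mem_Icc]
    constructor
    · rintro ⟨h1, h2⟩; exact ⟨x - j, by omega, by omega⟩
    · rintro ⟨t, ht, rfl⟩; omega]
  rw [Finset.sum_map]
  apply Finset.sum_congr rfl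
  intro t ht
  simp only [Finset.mem_range, Nat.lt_succ_iff] at ht
  simp only [Function.Embedding.coeFn_mk]
  have e1 : i + j - (t + j) = i - t := by omega
  have e3 : (X 1 : MvPolynomial (Fin 2) ℚ) ^ (i - t)
      = X 1 ^ (i - j - t) * X 1 ^ j := by
    rw [← pow_add]; congr 1; omega
  rw [e1, pow_add, e3]
  ring

lemma mem_s (N : ℕ) (hN : 2 ≤ N) :
    ∀ m, N - 1 ≤ m →
      schur2 m 0 ∈ Ideal.span {schur2 (N - 1) 0, schur2 N 0} := by
  intro m
  induction m using Nat.strong_induction_on with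
  | _ m ih =>
    intro hm
    by_cases h1 : m = N - 1
    · subst h1; exact Ideal.subset_span (by simp)
    by_cases h2 : m = N
    · subst h2; exact Ideal.subset_span (by simp)
    obtain ⟨k, rfl⟩ : ∃ k, m = k + 2 := ⟨m - 2, by omega⟩
    rw [schur2_rec]
    exact Ideal.sub_mem _
      (Ideal.mul_mem_left _ _ (ih (k + 1) (by omega) (by omega)))
      (Ideal.mul_mem_left _ _ (ih k (by omega) (by omega)))

lemma mem_pow_s (N : ℕ) (hN : 2 ≤ N) :
    ∀ k m, N - 1 ≤ m + k →
      (X 0 * X 1 : MvPolynomial (Fin 2) ℚ) ^ k * schur2 m 0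
        ∈ Ideal.span {schur2 (N - 1) 0, schur2 N 0} := by
  intro k
  induction k with
  | zero =>
    intro m hm
    simpa using mem_s N hN m (by omega)
  | succ k ih =>
    intro m hm
    have e : (X 0 * X 1 : MvPolynomial (Fin 2) ℚ) ^ (k + 1) * schur2 m 0
        = (X 0 + X 1) * ((X 0 * X 1) ^ k * schur2 (m + 1) 0)
          - (X 0 * X 1) ^ k * schur2 (m + 2) 0 := by
      linear_combination ((X 0 * X 1 : MvPolynomial (Fin 2) ℚ) ^ k) * (schur2_rec m)
    rw [e]
    exact Ideal.sub_mem _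
      (Ideal.mul_mem_left _ _ (ih (m + 1) (by omega)))
      (ih (m + 2) (by omega))

lemma memC (N : ℕ) (hN : 2 ≤ N) :
    ∀ q p c, q ≤ p → N - 1 ≤ c + p →
      (X 0 * X 1 : MvPolynomial (Fin 2) ℚ) ^ c * (schur2 p 0 * schur2 q 0)
        ∈ Ideal.span {schur2 (N - 1) 0, schur2 N 0} := by
  intro q
  induction q with
  | zero =>
    intro p c _ h
    rw [schur2_zero, mul_one]
    exact mem_pow_s N hN c p (by omega)
  | succ q ih =>
    intro p c hqp hcp
    obtain ⟨p', rfl⟩ : ∃ p', p = p' + 1 := ⟨p - 1, by omega⟩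
    have e : (X 0 * X 1 : MvPolynomial (Fin 2) ℚ) ^ c
          * (schur2 (p' + 1) 0 * schur2 (q + 1) 0)
        = (X 0 * X 1) ^ c * schur2 (p' + q + 2) 0
          + (X 0 * X 1) ^ (c + 1) * (schur2 p' 0 * schur2 q 0) := by
      rw [schur2_prod]; ring
    rw [e]
    exact Ideal.add_mem _
      (mem_pow_s N hN c (p' + q + 2) (by omega))
      (ih p' (c + 1) (by omega) (by omega))

lemma memD (N : ℕ) (hN : 2 ≤ N) :
    ∀ d c, c + d = N - 2 →
      (X 0 * X 1 : MvPolynomial (Fin 2) ℚ) ^ c * (schur2 d 0 * schur2 d 0)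
          - (X 0 * X 1) ^ (N - 2)
        ∈ Ideal.span {schur2 (N - 1) 0, schur2 N 0} := by
  intro d
  induction d with
  | zero =>
    intro c hc
    have : c = N - 2 := by omega
    subst this
    rw [schur2_zero]
    simp
  | succ d ih =>
    intro c hc
    have e : (X 0 * X 1 : MvPolynomial (Fin 2) ℚ) ^ c
          * (schur2 (d + 1) 0 * schur2 (d + 1) 0) - (X 0 * X 1) ^ (N - 2)
        = (X 0 * X 1) ^ c * schur2 (d + d + 2) 0
          + ((X 0 * X 1) ^ (c + 1) * (schur2 d 0 * schur2 d 0)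
              - (X 0 * X 1) ^ (N - 2)) := by
      rw [schur2_prod]; ring
    rw [e]
    exact Ideal.add_mem _
      (mem_pow_s N hN c (d + d + 2) (by omega))
      (ih (c + 1) (by omega))

/-- Duality in the cohomology of the Grassmannian `G_{2,N}`: for `N ≥ 2`, `i ≥ j ≥ 0`,
`a ≥ b ≥ 0` with `i ≤ N−2`, `a ≤ N−2` and `i+j+a+b = 2(N−2)`: if `(a,b) = (N−2−j, N−2−i)` then
`π_{i,j}·π_{a,b} − π_{N−2,N−2}` lies in the ideal of `ℚ[x,y]` generated by `π_{N−1,0}` and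
`π_{N,0}`; otherwise `π_{i,j}·π_{a,b}` itself lies in that ideal. -/
theorem schur2_duality (N i j a b : ℕ) (hN : 2 ≤ N)
    (hji : j ≤ i) (hba : b ≤ a) (hi : i ≤ N - 2) (ha : a ≤ N - 2)
    (hsum : i + j + a + b = 2 * (N - 2)) :
    ((a = N - 2 - j ∧ b = N - 2 - i) →
      schur2 i j * schur2 a b - schur2 (N - 2) (N - 2)
        ∈ Ideal.span {schur2 (N - 1) 0, schur2 N 0})
    ∧ (¬(a = N - 2 - j ∧ b = N - 2 - i) →
      schur2 i j * schur2 a b ∈ Ideal.span {schur2 (N - 1) 0, schur2 N 0}) := by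
  constructor
  · rintro ⟨rfl, rfl⟩
    rw [schur2_eq_mul hji, schur2_eq_mul hba, schur2_eq_mul (le_refl (N - 2)),
      Nat.sub_self, schur2_zero, mul_one]
    have hd : (N - 2 - j) - (N - 2 - i) = i - j := by omega
    rw [hd]
    have e : (X 0 * X 1 : MvPolynomial (Fin 2) ℚ) ^ j * schur2 (i - j) 0
          * ((X 0 * X 1) ^ (N - 2 - i) * schur2 (i - j) 0)
        = (X 0 * X 1) ^ (j + (N - 2 - i)) * (schur2 (i - j) 0 * schur2 (i - j) 0) := by
      rw [pow_add]; ring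
    rw [e]
    exact memD N hN (i - j) (j + (N - 2 - i)) (by omega)
  · intro hne
    rw [schur2_eq_mul hji, schur2_eq_mul hba]
    rcases le_total (a - b) (i - j) with h | h
    · have e : (X 0 * X 1 : MvPolynomial (Fin 2) ℚ) ^ j * schur2 (i - j) 0
            * ((X 0 * X 1) ^ b * schur2 (a - b) 0)
          = (X 0 * X 1) ^ (j + b) * (schur2 (i - j) 0 * schur2 (a - b) 0) := by
        rw [pow_add]; ring
      rw [e]
      exact memC N hN (a - b) (i - j) (j + b) h (by omega)
    · have e : (X 0 * X 1 : MvPolynomial (Fin 2) ℚ) ^ j * schur2 (i - j) 0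
            * ((X 0 * X 1) ^ b * schur2 (a - b) 0)
          = (X 0 * X 1) ^ (j + b) * (schur2 (a - b) 0 * schur2 (i - j) 0) := by
        rw [pow_add]; ring
      rw [e]
      exact memC N hN (i - j) (a - b) (j + b) h (by omega)
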